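/- For vectors u, v in ℝ^n (n ≥ 2) with angle(u, v) ≤ π/2, the angle between u and v is at most the sum over all 2-element subsets Ω of [n] of the angles between the restricted subvectors u_Ω and v_Ω (with the convention that the angle involving a zero vector is 0). -/

import Mathlib

open Finset

/-- Angle between two vectors in ℝ^k, with the convention that the angle
    involving a zero vector is 0. -/
noncomputable def ang {k : ℕ} (x y : Fin k → ℝ) : ℝ :=
  if x = 0 ∨ y = 0 then 0
  else Real.arccos ((∑ i, x i * y i) /
    (Real.sqrt (∑ i, x i ^ 2) * Real.sqrt (∑ i, y i ^ 2)))

/-- The restriction of a vector to a subset of coordinates (zero elsewhere). -/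
def restrict {k : ℕ} (x : Fin k → ℝ) (Ω : Finset (Fin k)) : Fin k → ℝ :=
  fun i => if i ∈ Ω then x i else 0

lemma ang_nonneg {k : ℕ} (x y : Fin k → ℝ) : 0 ≤ ang x y := by
  unfold ang; split
  · exact le_refl 0
  · exact Real.arccos_nonneg _

lemma ang_le_pi {k : ℕ} (x y : Fin k → ℝ) : ang x y ≤ Real.pi := by
  unfold ang; split
  · exact Real.pi_pos.le
  · exact Real.arccos_le_pi _

lemma sin_ang_nonneg {k : ℕ} (x y : Fin k → ℝ) : 0 ≤ Real.sin (ang x y) :=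
  Real.sin_nonneg_of_nonneg_of_le_pi (ang_nonneg x y) (ang_le_pi x y)

/-- superadditivity of sin² on [0, π/2] -/
lemma sin_sq_add_le (a b : ℝ) (ha : 0 ≤ a) (hb : 0 ≤ b) (hab : a + b ≤ Real.pi / 2) :
    Real.sin a ^ 2 + Real.sin b ^ 2 ≤ Real.sin (a + b) ^ 2 := by
  have hkey : Real.sin (a + b) ^ 2 - Real.sin a ^ 2 - Real.sin b ^ 2
      = 2 * Real.sin a * Real.sin b * Real.cos (a + b) := by
    rw [Real.sin_add, Real.cos_add]
    nlinarith [Real.sin_sq_add_cos_sq a, Real.sin_sq_add_cos_sq b]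
  have hpi := Real.pi_pos
  have hsa : 0 ≤ Real.sin a := Real.sin_nonneg_of_nonneg_of_le_pi ha (by linarith)
  have hsb : 0 ≤ Real.sin b := Real.sin_nonneg_of_nonneg_of_le_pi hb (by linarith)
  have hc : 0 ≤ Real.cos (a + b) :=
    Real.cos_nonneg_of_mem_Icc ⟨by linarith, hab⟩
  nlinarith [mul_nonneg (mul_nonneg hsa hsb) hc]

lemma sin_sq_sum_le {ι : Type*} (s : Finset ι) (f : ι → ℝ) (hf : ∀ i ∈ s, 0 ≤ f i)
    (hs : ∑ i ∈ s, f i ≤ Real.pi / 2) :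
    ∑ i ∈ s, Real.sin (f i) ^ 2 ≤ Real.sin (∑ i ∈ s, f i) ^ 2 := by
  induction s using Finset.cons_induction with
  | empty => simp
  | cons a t hat ih =>
    rw [Finset.sum_cons, Finset.sum_cons] at *
    have hfa : 0 ≤ f a := hf a (Finset.mem_cons_self a t)
    have hft : ∀ i ∈ t, 0 ≤ f i := fun i hi => hf i (Finset.mem_cons.2 (Or.inr hi))
    have htn : 0 ≤ ∑ i ∈ t, f i := Finset.sum_nonneg hft
    have ih' := ih hft (by linarith)
    have h2 := sin_sq_add_le (f a) (∑ i ∈ t, f i) hfa htn hs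
    linarith

lemma sum_restrict_mul {k : ℕ} (x y : Fin k → ℝ) (Ω : Finset (Fin k)) :
    ∑ i, _root_.restrict x Ω i * _root_.restrict y Ω i = ∑ i ∈ Ω, x i * y i := by
  have h : ∀ i, _root_.restrict x Ω i * _root_.restrict y Ω i = if i ∈ Ω then x i * y i else 0 := by
    intro i; unfold _root_.restrict; split <;> simp
  simp_rw [h]
  rw [Finset.sum_ite_mem, Finset.univ_inter]

lemma sum_restrict_sq {k : ℕ} (x : Fin k → ℝ) (Ω : Finset (Fin k)) :
    ∑ i, _root_.restrict x Ω i ^ 2 = ∑ i ∈ Ω, x i ^ 2 := by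
  have h : ∀ i, _root_.restrict x Ω i ^ 2 = if i ∈ Ω then x i ^ 2 else 0 := by
    intro i; unfold _root_.restrict; split <;> simp
  simp_rw [h]
  rw [Finset.sum_ite_mem, Finset.univ_inter]

lemma gram_le {k : ℕ} (x y : Fin k → ℝ) :
    (∑ i, x i ^ 2) * (∑ i, y i ^ 2) - (∑ i, x i * y i) ^ 2
      ≤ (∑ i, x i ^ 2) * (∑ i, y i ^ 2) * Real.sin (ang x y) ^ 2 := by
  by_cases h : x = 0 ∨ y = 0
  · rcases h with h | h <;> subst h <;> simp
  · push_neg at h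
    obtain ⟨hx, hy⟩ := h
    set A := ∑ i, x i ^ 2 with hA
    set B := ∑ i, y i ^ 2 with hB
    set C := ∑ i, x i * y i with hC
    have hApos : 0 < A := by
      obtain ⟨i, hi⟩ := Function.ne_iff.1 hx
      refine Finset.sum_pos' (fun j _ => sq_nonneg _) ⟨i, Finset.mem_univ i, ?_⟩
      have : x i ≠ 0 := hi
      positivity
    have hBpos : 0 < B := by
      obtain ⟨i, hi⟩ := Function.ne_iff.1 hy
      refine Finset.sum_pos' (fun j _ => sq_nonneg _) ⟨i, Finset.mem_univ i, ?_⟩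
      have : y i ≠ 0 := hi
      positivity
    have hcs : C ^ 2 ≤ A * B := Finset.sum_mul_sq_le_sq_mul_sq _ _ _
    have hang : ang x y = Real.arccos (C / (Real.sqrt A * Real.sqrt B)) := by
      unfold ang
      rw [if_neg (by push_neg; exact ⟨hx, hy⟩)]
    have hsq : (C / (Real.sqrt A * Real.sqrt B)) ^ 2 = C ^ 2 / (A * B) := by
      rw [div_pow, mul_pow, Real.sq_sqrt hApos.le, Real.sq_sqrt hBpos.le]
    have hAB : (0:ℝ) < A * B := mul_pos hApos hBpos
    have hnn : 0 ≤ 1 - C ^ 2 / (A * B) := by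
      rw [sub_nonneg, div_le_one hAB]; exact hcs
    have h1 : Real.sin (ang x y) ^ 2 = 1 - C ^ 2 / (A * B) := by
      rw [hang, Real.sin_arccos, hsq, Real.sq_sqrt hnn]
    rw [h1]
    field_simp
    exact le_refl _

lemma lagrange_full {n : ℕ} (u v : Fin n → ℝ) :
    ∑ p ∈ (Finset.univ ×ˢ Finset.univ : Finset (Fin n × Fin n)),
        (u p.1 * v p.2 - u p.2 * v p.1) ^ 2
      = 2 * ((∑ i, u i ^ 2) * (∑ i, v i ^ 2)) - 2 * (∑ i, u i * v i) ^ 2 := by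
  rw [Finset.sum_product]
  have hrow : ∀ i, ∑ j, (u i * v j - u j * v i) ^ 2
      = u i ^ 2 * (∑ j, v j ^ 2) + v i ^ 2 * (∑ j, u j ^ 2)
        - 2 * (u i * v i) * (∑ j, u j * v j) := by
    intro i
    have h : ∀ j : Fin n, (u i * v j - u j * v i) ^ 2
        = u i ^ 2 * v j ^ 2 + v i ^ 2 * u j ^ 2 - 2 * (u i * v i) * (u j * v j) :=
      fun j => by ring
    simp_rw [h]
    rw [Finset.sum_sub_distrib, Finset.sum_add_distrib, ← Finset.mul_sum, ← Finset.mul_sum,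
      ← Finset.mul_sum]
  simp_rw [hrow]
  rw [Finset.sum_sub_distrib, Finset.sum_add_distrib, ← Finset.sum_mul, ← Finset.sum_mul,
    ← Finset.sum_mul]
  have h2 : ∑ x, 2 * u x * v x = 2 * ∑ x, u x * v x := by
    rw [Finset.mul_sum]
    exact Finset.sum_congr rfl fun x _ => by ring
  ring_nf
  rw [show (∑ x, u x * v x * 2) = 2 * ∑ x, u x * v x by
    rw [Finset.mul_sum]; exact Finset.sum_congr rfl fun x _ => by ring]
  ring

lemma lagrange_pairs {n : ℕ} (u v : Fin n → ℝ) :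
    ∑ Ω ∈ Finset.powersetCard 2 (Finset.univ : Finset (Fin n)),
      ((∑ i ∈ Ω, u i ^ 2) * (∑ i ∈ Ω, v i ^ 2) - (∑ i ∈ Ω, u i * v i) ^ 2)
    = (∑ i, u i ^ 2) * (∑ i, v i ^ 2) - (∑ i, u i * v i) ^ 2 := by
  classical
  set d : Fin n × Fin n → ℝ := fun p => (u p.1 * v p.2 - u p.2 * v p.1) ^ 2 with hd
  have step1 : ∑ Ω ∈ Finset.powersetCard 2 (Finset.univ : Finset (Fin n)),
      ((∑ i ∈ Ω, u i ^ 2) * (∑ i ∈ Ω, v i ^ 2) - (∑ i ∈ Ω, u i * v i) ^ 2)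
      = ∑ p ∈ (Finset.univ ×ˢ Finset.univ : Finset (Fin n × Fin n)).filter
          (fun p => p.1 < p.2), d p := by
    refine (Finset.sum_nbij (i := fun p : Fin n × Fin n => ({p.1, p.2} : Finset (Fin n)))
      ?_ ?_ ?_ ?_).symm
    · intro p hp
      simp only [Finset.mem_filter] at hp
      rw [Finset.mem_powersetCard]
      exact ⟨Finset.subset_univ _, Finset.card_pair (ne_of_lt hp.2)⟩
    · intro p hp q hq hpq
      simp only [Finset.coe_filter, Set.mem_setOf_eq] at hp hq
      have hpq : ({p.1, p.2} : Finset (Fin n)) = {q.1, q.2} := hpq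
      have h1 : p.1 ∈ ({q.1, q.2} : Finset (Fin n)) := by rw [← hpq]; simp
      have h2 : p.2 ∈ ({q.1, q.2} : Finset (Fin n)) := by rw [← hpq]; simp
      simp only [Finset.mem_insert, Finset.mem_singleton] at h1 h2
      have hp2 := hp.2
      have hq2 := hq.2
      rcases h1 with h1 | h1
      · rcases h2 with h2 | h2
        · exact absurd (h1 ▸ h2 ▸ hp2) (lt_irrefl _)
        · exact Prod.ext h1 h2
      · rcases h2 with h2 | h2
        · exact absurd (lt_trans (h2 ▸ hq2) (h1 ▸ hp2)) (lt_irrefl _)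
        · exact absurd (h1 ▸ h2 ▸ hp2) (lt_irrefl _)
    · intro Ω hΩ
      simp only [Finset.mem_coe, Finset.mem_powersetCard] at hΩ
      obtain ⟨a, b, hab, rfl⟩ := Finset.card_eq_two.1 hΩ.2
      rcases lt_or_gt_of_ne hab with hlt | hlt
      · exact ⟨(a, b), by simp [hlt], rfl⟩
      · exact ⟨(b, a), by simp [hlt], by rw [Finset.pair_comm]⟩
    · intro p hp
      simp only [Finset.mem_filter] at hp
      have hne : p.1 ≠ p.2 := ne_of_lt hp.2
      rw [Finset.sum_pair hne, Finset.sum_pair hne, Finset.sum_pair hne]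
      simp only [hd]
      ring
  have e3 : ∑ p ∈ (Finset.univ ×ˢ Finset.univ : Finset (Fin n × Fin n)).filter
        (fun p => p.2 < p.1), d p
      = ∑ p ∈ (Finset.univ ×ˢ Finset.univ : Finset (Fin n × Fin n)).filter
        (fun p => p.1 < p.2), d p := by
    refine Finset.sum_nbij' (i := Prod.swap) (j := Prod.swap) ?_ ?_ ?_ ?_ ?_
    · intro p hp; simp only [Finset.mem_filter] at hp ⊢
      exact ⟨by simp, hp.2⟩
    · intro p hp; simp only [Finset.mem_filter] at hp ⊢
      exact ⟨by simp, hp.2⟩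
    · intro p _; simp
    · intro p _; simp
    · intro p _
      simp only [hd, Prod.fst_swap, Prod.snd_swap]
      ring
  have hsplit := Finset.sum_filter_add_sum_filter_not
    (Finset.univ ×ˢ Finset.univ : Finset (Fin n × Fin n)) (fun p => p.1 < p.2) d
  have e1 : ∑ p ∈ (Finset.univ ×ˢ Finset.univ : Finset (Fin n × Fin n)).filter
        (fun p => ¬ p.1 < p.2), d p
      = ∑ p ∈ (Finset.univ ×ˢ Finset.univ : Finset (Fin n × Fin n)).filter
        (fun p => p.2 < p.1), d p := by
    have hsplit2 := Finset.sum_filter_add_sum_filter_not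
      ((Finset.univ ×ˢ Finset.univ : Finset (Fin n × Fin n)).filter
        (fun p => ¬ p.1 < p.2)) (fun p => p.2 < p.1) d
    have hff : ((Finset.univ ×ˢ Finset.univ : Finset (Fin n × Fin n)).filter
          (fun p => ¬ p.1 < p.2)).filter (fun p => p.2 < p.1)
        = (Finset.univ ×ˢ Finset.univ : Finset (Fin n × Fin n)).filter
          (fun p => p.2 < p.1) := by
      rw [Finset.filter_filter]
      exact Finset.filter_congr fun p _ => by
        constructor
        · exact fun h => h.2
        · exact fun h => ⟨asymm h, h⟩
    have hzero : ∑ p ∈ ((Finset.univ ×ˢ Finset.univ : Finset (Fin n × Fin n)).filter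
          (fun p => ¬ p.1 < p.2)).filter (fun p => ¬ p.2 < p.1), d p = 0 := by
      apply Finset.sum_eq_zero
      intro p hp
      simp only [Finset.mem_filter, not_lt] at hp
      have : p.1 = p.2 := le_antisymm hp.2 hp.1.2
      simp only [hd, this]
      ring
    rw [hff, hzero, add_zero] at hsplit2
    exact hsplit2.symm
  have hfull := lagrange_full u v
  have hfull' : ∑ p ∈ (Finset.univ ×ˢ Finset.univ : Finset (Fin n × Fin n)), d p
      = 2 * ((∑ i, u i ^ 2) * (∑ i, v i ^ 2)) - 2 * (∑ i, u i * v i) ^ 2 := hfull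
  rw [step1]
  rw [e1, e3] at hsplit
  linarith [hsplit, hfull']

theorem stmt0 (n : ℕ) (hn : 2 ≤ n) (u v : Fin n → ℝ)
    (h : ang u v ≤ Real.pi / 2) :
    ang u v ≤ ∑ Ω ∈ Finset.powersetCard 2 (Finset.univ : Finset (Fin n)),
      ang (restrict u Ω) (restrict v Ω) := by
  classical
  have hpi := Real.pi_pos
  set S := ∑ Ω ∈ Finset.powersetCard 2 (Finset.univ : Finset (Fin n)),
      ang (restrict u Ω) (restrict v Ω) with hSdef
  have hSnonneg : 0 ≤ S := Finset.sum_nonneg fun Ω _ => ang_nonneg _ _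
  rcases le_or_gt (Real.pi / 2) S with hS2 | hS2
  · linarith
  by_cases h0 : u = 0 ∨ v = 0
  · have hz : ang u v = 0 := by unfold ang; rw [if_pos h0]
    linarith [hz ▸ hSnonneg]
  push_neg at h0
  obtain ⟨hu, hv⟩ := h0
  set P1 := ∑ i, u i ^ 2 with hP1
  set P2 := ∑ i, v i ^ 2 with hP2
  set C := ∑ i, u i * v i with hC
  have hP1pos : 0 < P1 := by
    obtain ⟨i, hi⟩ := Function.ne_iff.1 hu
    refine Finset.sum_pos' (fun j _ => sq_nonneg _) ⟨i, Finset.mem_univ i, ?_⟩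
    have : u i ≠ 0 := hi
    positivity
  have hP2pos : 0 < P2 := by
    obtain ⟨i, hi⟩ := Function.ne_iff.1 hv
    refine Finset.sum_pos' (fun j _ => sq_nonneg _) ⟨i, Finset.mem_univ i, ?_⟩
    have : v i ≠ 0 := hi
    positivity
  have hΩbound : ∀ Ω ∈ Finset.powersetCard 2 (Finset.univ : Finset (Fin n)),
      (∑ i ∈ Ω, u i ^ 2) * (∑ i ∈ Ω, v i ^ 2) - (∑ i ∈ Ω, u i * v i) ^ 2
        ≤ P1 * P2 * Real.sin (ang (restrict u Ω) (restrict v Ω)) ^ 2 := by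
    intro Ω _
    have hg := gram_le (restrict u Ω) (restrict v Ω)
    rw [sum_restrict_sq, sum_restrict_sq, sum_restrict_mul] at hg
    have hA : ∑ i ∈ Ω, u i ^ 2 ≤ P1 :=
      Finset.sum_le_sum_of_subset_of_nonneg (Finset.subset_univ Ω)
        (fun i _ _ => sq_nonneg _)
    have hB : ∑ i ∈ Ω, v i ^ 2 ≤ P2 :=
      Finset.sum_le_sum_of_subset_of_nonneg (Finset.subset_univ Ω)
        (fun i _ _ => sq_nonneg _)
    have hAnn : 0 ≤ ∑ i ∈ Ω, u i ^ 2 := Finset.sum_nonneg fun i _ => sq_nonneg _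
    have hBnn : 0 ≤ ∑ i ∈ Ω, v i ^ 2 := Finset.sum_nonneg fun i _ => sq_nonneg _
    have hs2 : 0 ≤ Real.sin (ang (restrict u Ω) (restrict v Ω)) ^ 2 := sq_nonneg _
    calc (∑ i ∈ Ω, u i ^ 2) * (∑ i ∈ Ω, v i ^ 2) - (∑ i ∈ Ω, u i * v i) ^ 2
        ≤ (∑ i ∈ Ω, u i ^ 2) * (∑ i ∈ Ω, v i ^ 2)
            * Real.sin (ang (restrict u Ω) (restrict v Ω)) ^ 2 := hg
      _ ≤ P1 * P2 * Real.sin (ang (restrict u Ω) (restrict v Ω)) ^ 2 := by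
          apply mul_le_mul_of_nonneg_right _ hs2
          exact mul_le_mul hA hB hBnn hP1pos.le
  have hsum : P1 * P2 - C ^ 2
      ≤ P1 * P2 * ∑ Ω ∈ Finset.powersetCard 2 (Finset.univ : Finset (Fin n)),
          Real.sin (ang (restrict u Ω) (restrict v Ω)) ^ 2 := by
    rw [← lagrange_pairs u v, Finset.mul_sum]
    exact Finset.sum_le_sum hΩbound
  have hcs : C ^ 2 ≤ P1 * P2 := Finset.sum_mul_sq_le_sq_mul_sq _ _ _
  have hAB : (0:ℝ) < P1 * P2 := mul_pos hP1pos hP2pos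
  have hang : ang u v = Real.arccos (C / (Real.sqrt P1 * Real.sqrt P2)) := by
    unfold ang
    rw [if_neg (by push_neg; exact ⟨hu, hv⟩)]
  have hsqc : (C / (Real.sqrt P1 * Real.sqrt P2)) ^ 2 = C ^ 2 / (P1 * P2) := by
    rw [div_pow, mul_pow, Real.sq_sqrt hP1pos.le, Real.sq_sqrt hP2pos.le]
  have hnn : 0 ≤ 1 - C ^ 2 / (P1 * P2) := by
    rw [sub_nonneg, div_le_one hAB]; exact hcs
  have hsin2 : Real.sin (ang u v) ^ 2 = 1 - C ^ 2 / (P1 * P2) := by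
    rw [hang, Real.sin_arccos, hsqc, Real.sq_sqrt hnn]
  have hSig : Real.sin (ang u v) ^ 2
      ≤ ∑ Ω ∈ Finset.powersetCard 2 (Finset.univ : Finset (Fin n)),
          Real.sin (ang (restrict u Ω) (restrict v Ω)) ^ 2 := by
    have heq : 1 - C ^ 2 / (P1 * P2) = (P1 * P2 - C ^ 2) / (P1 * P2) := by
      field_simp
    rw [hsin2, heq, div_le_iff₀ hAB]
    linarith [hsum]
  have hsinS : ∑ Ω ∈ Finset.powersetCard 2 (Finset.univ : Finset (Fin n)),
      Real.sin (ang (restrict u Ω) (restrict v Ω)) ^ 2 ≤ Real.sin S ^ 2 := by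
    rw [hSdef]
    exact sin_sq_sum_le _ _ (fun Ω _ => ang_nonneg _ _) hS2.le
  have hsθ : 0 ≤ Real.sin (ang u v) := sin_ang_nonneg u v
  have hsS : 0 ≤ Real.sin S :=
    Real.sin_nonneg_of_nonneg_of_le_pi hSnonneg (by linarith)
  have h1 : Real.sin (ang u v) ≤ Real.sin S := by nlinarith [hSig, hsinS]
  have hθ0 : 0 ≤ ang u v := ang_nonneg u v
  calc ang u v = Real.arcsin (Real.sin (ang u v)) :=
        (Real.arcsin_sin (by linarith) h).symm
    _ ≤ Real.arcsin (Real.sin S) := Real.monotone_arcsin h1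
    _ = S := Real.arcsin_sin (by linarith) hS2.le
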